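/- arXiv:1905.13477 — 3 statements merged into one kernel-verified Lean document; each statement's English description precedes it below -/
import Mathlib

section
/- Let B be a closed ball in ℝ^d and let f be a measurable function supported in B that belongs to L log log L(B). Then the Hardy–Littlewood maximal function M(f) belongs to L_Ψ(B), i.e. ∫_B Ψ(x, M(f)(x)) dx < ∞. -/
open MeasureTheory Metric Real ENNReal NNReal

/-- `log⁺ u = max (log u) 0`. -/
noncomputable def logPlus (u : ℝ) : ℝ := max (Real.log u) 0

/-- `Ψ(x,t) = t / (log(e+t) + log(e+|x|))`. -/
noncomputable def PsiFun {d : ℕ} (x : EuclideanSpace ℝ (Fin d)) (t : ℝ) : ℝ :=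
  t / (Real.log (Real.exp 1 + t) + Real.log (Real.exp 1 + ‖x‖))

/-- The Hardy–Littlewood maximal function. -/
noncomputable def HLMax {d : ℕ} (f : EuclideanSpace ℝ (Fin d) → ℂ)
    (x : EuclideanSpace ℝ (Fin d)) : ℝ≥0∞ :=
  ⨆ (r : ℝ) (_ : 0 < r),
    (volume (Metric.ball x r))⁻¹ * ∫⁻ y in Metric.ball x r, (‖f y‖₊ : ℝ≥0∞)

/-! ### Auxiliary definitions -/

open Set

/-- The average of `‖f‖` over the ball of radius `r` around `x`. -/
noncomputable def ballAvg {d : ℕ} (f : EuclideanSpace ℝ (Fin d) → ℂ) (r : ℝ)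
    (x : EuclideanSpace ℝ (Fin d)) : ℝ≥0∞ :=
  (volume (Metric.ball x r))⁻¹ * ∫⁻ y in Metric.ball x r, (‖f y‖₊ : ℝ≥0∞)

noncomputable def HLMax' {d : ℕ} (f : EuclideanSpace ℝ (Fin d) → ℂ)
    (x : EuclideanSpace ℝ (Fin d)) : ℝ≥0∞ :=
  ⨆ (r : ℝ) (_ : 0 < r), ballAvg f r x

lemma HLMax_eq_HLMax' {d : ℕ} (f : EuclideanSpace ℝ (Fin d) → ℂ) : HLMax f = HLMax' f := rfl

/-! ### Elementary real lemmas -/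

lemma logPlus_nonneg (u : ℝ) : 0 ≤ logPlus u := le_max_right _ _

lemma measurable_logPlus : Measurable logPlus := Real.measurable_log.max measurable_const

lemma log_max_one {v : ℝ} (hv : 0 ≤ v) : Real.log (max 1 v) = logPlus v := by
  rcases le_total v 1 with h | h
  · rw [max_eq_left h, Real.log_one, logPlus, eq_comm, max_eq_right]
    exact Real.log_nonpos hv h
  · rw [max_eq_right h, logPlus, max_eq_left (Real.log_nonneg h)]

lemma exp_one_ge_two : (2 : ℝ) ≤ Real.exp 1 := by
  have := Real.add_one_le_exp (1 : ℝ); linarith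

lemma log_two_le_one : Real.log 2 ≤ 1 := by
  rw [Real.log_le_iff_le_exp two_pos]; exact exp_one_ge_two

lemma one_le_log_e_add (u : ℝ) (hu : 0 ≤ u) : 1 ≤ Real.log (Real.exp 1 + u) := by
  rw [Real.le_log_iff_exp_le (by positivity)]; linarith

lemma log_e_add_le (u : ℝ) (hu : 0 ≤ u) :
    Real.log (Real.exp 1 + u) ≤ 2 + logPlus u := by
  have he : (2:ℝ) ≤ Real.exp 1 := exp_one_ge_two
  have hm : (1:ℝ) ≤ max 1 u := le_max_left _ _
  have h1 : Real.exp 1 + u ≤ (Real.exp 1 + 1) * max 1 u := by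
    rcases le_total u 1 with h | h
    · rw [max_eq_left h]; linarith
    · rw [max_eq_right h]; nlinarith
  have h2 : Real.log (Real.exp 1 + u) ≤ Real.log ((Real.exp 1 + 1) * max 1 u) :=
    Real.log_le_log (by positivity) h1
  rw [Real.log_mul (by positivity) (by positivity), log_max_one hu] at h2
  have h3 : Real.log (Real.exp 1 + 1) ≤ 2 := by
    rw [Real.log_le_iff_le_exp (by positivity), show (2:ℝ) = 1 + 1 by norm_num, Real.exp_add]
    nlinarith [Real.exp_pos 1]
  linarith

lemma logPlus_two_mul (u : ℝ) (hu : 0 ≤ u) :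
    logPlus (2 * u) ≤ Real.log 2 + logPlus u := by
  rcases le_total (2 * u) 1 with h | h
  · have : logPlus (2 * u) = 0 := by
      rw [logPlus, max_eq_right]; exact Real.log_nonpos (by linarith) h
    rw [this]
    have := logPlus_nonneg u
    have := Real.log_nonneg (by norm_num : (1:ℝ) ≤ 2)
    linarith
  · have h2u : logPlus (2 * u) = Real.log (2 * u) := by
      rw [logPlus, max_eq_left (Real.log_nonneg h)]
    rw [h2u, Real.log_mul (by norm_num) (by nlinarith)]
    have : Real.log u ≤ logPlus u := le_max_left _ _
    linarith

lemma loglog_le (u : ℝ) (hu : 0 ≤ u) :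
    Real.log (Real.log (Real.exp 1 + 2 * u)) ≤ 2 + logPlus (logPlus u) := by
  have ha1 : (1:ℝ) ≤ Real.log (Real.exp 1 + 2 * u) := one_le_log_e_add _ (by linarith)
  have ha2 : Real.log (Real.exp 1 + 2 * u) ≤ 3 + logPlus u := by
    have := log_e_add_le (2 * u) (by linarith)
    have := logPlus_two_mul u hu
    have := log_two_le_one
    linarith
  have hlp := logPlus_nonneg u
  have h4 : 3 + logPlus u ≤ 4 * max 1 (logPlus u) := by
    rcases le_total (logPlus u) 1 with h | h
    · rw [max_eq_left h]; linarith
    · rw [max_eq_right h]; linarith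
  have h5 : Real.log (Real.log (Real.exp 1 + 2 * u)) ≤ Real.log (4 * max 1 (logPlus u)) :=
    Real.log_le_log (by linarith) (by linarith)
  rw [Real.log_mul (by norm_num) (by positivity), log_max_one hlp] at h5
  have h6 : Real.log 4 ≤ 2 := by
    rw [Real.log_le_iff_le_exp (by norm_num), show (2:ℝ) = 1 + 1 by norm_num, Real.exp_add]
    nlinarith [exp_one_ge_two]
  linarith

lemma hasDerivAt_loglog (t : ℝ) (ht : 0 ≤ t) :
    HasDerivAt (fun s => Real.log (Real.log (Real.exp 1 + s)))
      (1 / (Real.exp 1 + t) / Real.log (Real.exp 1 + t)) t := by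
  have h0 : Real.exp 1 + t ≠ 0 := by positivity
  have h1 : HasDerivAt (fun s : ℝ => Real.exp 1 + s) 1 t := (hasDerivAt_id t).const_add _
  have h2 := h1.log h0
  have h3 : Real.log (Real.exp 1 + t) ≠ 0 := by
    have := one_le_log_e_add t ht; linarith
  simpa using h2.log h3

lemma loglog_nonneg (u : ℝ) (hu : 0 ≤ u) : 0 ≤ Real.log (Real.log (Real.exp 1 + u)) :=
  Real.log_nonneg (one_le_log_e_add u hu)

lemma psiFun_le {d : ℕ} (x : EuclideanSpace ℝ (Fin d)) (t : ℝ) (ht : 0 ≤ t) :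
    PsiFun x t ≤ t / Real.log (Real.exp 1 + t) := by
  have h1 : (1:ℝ) ≤ Real.log (Real.exp 1 + t) := one_le_log_e_add t ht
  have h2 : (1:ℝ) ≤ Real.log (Real.exp 1 + ‖x‖) := one_le_log_e_add _ (norm_nonneg x)
  apply div_le_div_of_nonneg_left ht (by linarith)
  linarith

lemma psiFun_le_self {d : ℕ} (x : EuclideanSpace ℝ (Fin d)) (t : ℝ) (ht : 0 ≤ t) :
    PsiFun x t ≤ t := by
  have h1 : (1:ℝ) ≤ Real.log (Real.exp 1 + t) := one_le_log_e_add t ht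
  have h2 : (1:ℝ) ≤ Real.log (Real.exp 1 + ‖x‖) := one_le_log_e_add _ (norm_nonneg x)
  exact div_le_self ht (by linarith)

/-! ### The key integral estimate -/

lemma lintegral_inv_t_log_le (M : ℝ) (hM : 0 ≤ M) :
    ∫⁻ t in Set.Ioc 2 M, ENNReal.ofReal (1 / (t * Real.log (Real.exp 1 + t)))
      ≤ ENNReal.ofReal (3 * Real.log (Real.log (Real.exp 1 + M))) := by
  by_cases hM2 : M ≤ 2
  · rw [Set.Ioc_eq_empty (by exact not_lt.2 hM2), Measure.restrict_empty, lintegral_zero_measure]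
    exact zero_le
  push_neg at hM2
  set D : ℝ → ℝ := fun t => 1 / (Real.exp 1 + t) / Real.log (Real.exp 1 + t) with hD
  have hDcont : ContinuousOn (fun t => 3 * D t) (Icc 2 M) := by
    apply ContinuousOn.mul continuousOn_const
    apply ContinuousOn.div
    · apply ContinuousOn.div continuousOn_const
        ((continuous_const.add continuous_id).continuousOn)
      intro t ht
      have : (0:ℝ) < Real.exp 1 + t := by have := Real.exp_pos 1; have := ht.1; positivity
      exact this.ne'
    · apply ContinuousOn.log ((continuous_const.add continuous_id).continuousOn)
      intro t ht
      have : (0:ℝ) < Real.exp 1 + t := by have := Real.exp_pos 1; have := ht.1; positivity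
      exact this.ne'
    · intro t ht
      have := one_le_log_e_add t (by linarith [ht.1] : (0:ℝ) ≤ t); linarith
  have hInt : IntegrableOn (fun t => 3 * D t) (Icc 2 M) volume :=
    hDcont.integrableOn_Icc
  have hIntIoc : IntegrableOn (fun t => 3 * D t) (Ioc 2 M) volume :=
    hInt.mono_set Ioc_subset_Icc_self
  have hDmeas : Measurable fun t : ℝ => ENNReal.ofReal (3 * D t) := by
    apply ENNReal.measurable_ofReal.comp
    apply Measurable.const_mul
    exact (measurable_const.div (measurable_const.add measurable_id)).div
      (Real.measurable_log.comp (measurable_const.add measurable_id))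
  calc ∫⁻ t in Set.Ioc 2 M, ENNReal.ofReal (1 / (t * Real.log (Real.exp 1 + t)))
      ≤ ∫⁻ t in Set.Ioc 2 M, ENNReal.ofReal (3 * D t) := by
        apply setLIntegral_mono hDmeas
        intro t ht
        apply ENNReal.ofReal_le_ofReal
        have ht2 : (2:ℝ) < t := ht.1
        have hL : (1:ℝ) ≤ Real.log (Real.exp 1 + t) := one_le_log_e_add t (by linarith)
        have hlt3 : Real.exp 1 + t ≤ 3 * t := by
          have := Real.exp_one_lt_d9; nlinarith
        rw [hD]
        simp only [div_div]
        rw [show (3:ℝ) * (1 / ((Real.exp 1 + t) * Real.log (Real.exp 1 + t)))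
          = 3 / ((Real.exp 1 + t) * Real.log (Real.exp 1 + t)) by ring]
        rw [div_le_div_iff₀ (by positivity) (by positivity)]
        nlinarith
    _ = ENNReal.ofReal (∫ t in Set.Ioc 2 M, 3 * D t) := by
        rw [ofReal_integral_eq_lintegral_ofReal hIntIoc]
        filter_upwards [self_mem_ae_restrict measurableSet_Ioc] with t ht
        have hL : (1:ℝ) ≤ Real.log (Real.exp 1 + t) := one_le_log_e_add t (by linarith [ht.1])
        have : (0:ℝ) < Real.exp 1 + t := by have := Real.exp_pos 1; linarith [ht.1]
        rw [hD]
        positivity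
    _ ≤ ENNReal.ofReal (3 * Real.log (Real.log (Real.exp 1 + M))) := by
        apply ENNReal.ofReal_le_ofReal
        have heq : ∫ t in Set.Ioc 2 M, 3 * D t
            = 3 * Real.log (Real.log (Real.exp 1 + M))
              - 3 * Real.log (Real.log (Real.exp 1 + 2)) := by
          rw [← intervalIntegral.integral_of_le hM2.le]
          apply intervalIntegral.integral_eq_sub_of_hasDerivAt
          · intro t ht
            rw [uIcc_of_le hM2.le] at ht
            exact (hasDerivAt_loglog t (by linarith [ht.1])).const_mul 3
          · rw [intervalIntegrable_iff_integrableOn_Ioc_of_le hM2.le]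
            exact hIntIoc
        rw [heq]
        have := loglog_nonneg 2 (by norm_num)
        linarith

/-! ### Measurability of the maximal function -/

lemma hlmax_eq_rat_sup {d : ℕ} (f : EuclideanSpace ℝ (Fin d) → ℂ)
    (x : EuclideanSpace ℝ (Fin d)) :
    HLMax' f x = ⨆ (q : ℚ) (_ : 0 < (q : ℝ)), ballAvg f q x := by
  apply le_antisymm
  · apply iSup₂_le
    intro r hr
    set μ' := volume.withDensity (fun y : EuclideanSpace ℝ (Fin d) => (‖f y‖₊ : ℝ≥0∞)) with hμ'
    have hnu : ∀ s : Set (EuclideanSpace ℝ (Fin d)), MeasurableSet s →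
        μ' s = ∫⁻ y in s, (‖f y‖₊ : ℝ≥0∞) := by
      intro s hs
      rw [hμ', withDensity_apply _ hs]
    obtain ⟨q₀, hq₀, hq₀r⟩ := exists_rat_btwn hr
    let ι := {q : ℚ // 0 < (q : ℝ) ∧ (q : ℝ) < r}
    have : Nonempty ι := ⟨⟨q₀, by exact_mod_cast hq₀, hq₀r⟩⟩
    have hdir : Directed (· ⊆ ·) (fun q : ι => Metric.ball x (q : ℝ)) := by
      intro a b
      rcases le_total (a : ℚ) (b : ℚ) with h | h
      · exact ⟨b, Metric.ball_subset_ball (by exact_mod_cast h), subset_rfl⟩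
      · exact ⟨a, subset_rfl, Metric.ball_subset_ball (by exact_mod_cast h)⟩
    have hun : Metric.ball x r = ⋃ q : ι, Metric.ball x (q : ℝ) := by
      ext y
      simp only [mem_iUnion, Metric.mem_ball]
      constructor
      · intro hy
        obtain ⟨q, hq1, hq2⟩ := exists_rat_btwn hy
        exact ⟨⟨q, ⟨lt_of_le_of_lt dist_nonneg hq1, hq2⟩⟩, hq1⟩
      · rintro ⟨q, hq⟩
        exact hq.trans q.2.2
    have key : μ' (Metric.ball x r) = ⨆ q : ι, μ' (Metric.ball x (q : ℝ)) := by
      rw [hun]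
      exact Directed.measure_iUnion hdir
    calc ballAvg f r x
        = (volume (Metric.ball x r))⁻¹ * μ' (Metric.ball x r) := by
          rw [hnu _ measurableSet_ball]; rfl
      _ = ⨆ q : ι, (volume (Metric.ball x r))⁻¹ * μ' (Metric.ball x (q : ℝ)) := by
          rw [key, ENNReal.mul_iSup]
      _ ≤ ⨆ q : ι, ballAvg f (q : ℝ) x := by
          apply iSup_mono
          intro q
          rw [hnu _ measurableSet_ball]
          unfold ballAvg
          exact mul_le_mul_left (ENNReal.inv_le_inv.2 (measure_mono
            (Metric.ball_subset_ball q.2.2.le))) _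
      _ ≤ ⨆ (q : ℚ) (_ : 0 < (q : ℝ)), ballAvg f q x := by
          apply iSup_le
          intro q
          exact le_iSup₂ (f := fun (q : ℚ) (_ : 0 < (q:ℝ)) => ballAvg f q x) q.1 q.2.1
  · exact iSup₂_le fun q hq => le_iSup₂ (f := fun (r : ℝ) (_ : 0 < r) => ballAvg f r x) (q : ℝ) hq

lemma measurable_ballAvg {d : ℕ} (f : EuclideanSpace ℝ (Fin d) → ℂ) (hf : Measurable f) (r : ℝ) :
    Measurable (ballAvg f r) := by
  unfold ballAvg
  have hconst : ∀ x : EuclideanSpace ℝ (Fin d), volume (Metric.ball x r) =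
      volume (Metric.ball (0 : EuclideanSpace ℝ (Fin d)) r) := fun x =>
    Measure.addHaar_ball_center volume x r
  simp_rw [hconst]
  apply Measurable.const_mul
  have : ∀ x : EuclideanSpace ℝ (Fin d), (∫⁻ y in Metric.ball x r, (‖f y‖₊ : ℝ≥0∞)) =
      ∫⁻ y, ({p : EuclideanSpace ℝ (Fin d) × EuclideanSpace ℝ (Fin d) | dist p.2 p.1 < r}.indicator
        (fun p => (‖f p.2‖₊ : ℝ≥0∞)) (x, y)) := by
    intro x
    rw [← lintegral_indicator measurableSet_ball]
    congr 1
  simp_rw [this]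
  apply Measurable.lintegral_prod_right'
  apply Measurable.indicator
  · exact (hf.comp measurable_snd).enorm
  · exact measurableSet_lt (measurable_dist.comp (measurable_snd.prodMk measurable_fst))
      measurable_const

lemma measurable_hlmax {d : ℕ} (f : EuclideanSpace ℝ (Fin d) → ℂ) (hf : Measurable f) :
    Measurable (HLMax' f) := by
  have : HLMax' f = fun x => ⨆ (q : ℚ) (_ : 0 < (q : ℝ)), ballAvg f q x := by
    ext x; exact hlmax_eq_rat_sup f x
  rw [this]
  exact Measurable.iSup fun q => Measurable.iSup fun _ => measurable_ballAvg f hf q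

/-! ### Weak type (1,1) estimate -/

lemma hlmax_weak_type {d : ℕ} (hd : d ≠ 0) (g : EuclideanSpace ℝ (Fin d) → ℂ)
    {l : ℝ≥0∞} (hl0 : l ≠ 0) (hltop : l ≠ ∞) :
    volume {x | l < HLMax' g x} ≤ 5 ^ d * (∫⁻ y, (‖g y‖₊ : ℝ≥0∞)) / l := by
  classical
  set I := ∫⁻ y, (‖g y‖₊ : ℝ≥0∞) with hI
  by_cases hItop : I = ∞
  · rw [hItop, ENNReal.mul_top (by positivity), ENNReal.top_div_of_ne_top hltop]
    exact le_top
  set ν := volume.withDensity (fun y : EuclideanSpace ℝ (Fin d) => (‖g y‖₊ : ℝ≥0∞)) with hν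
  have hνapp : ∀ (x : EuclideanSpace ℝ (Fin d)) (s : ℝ),
      ν (Metric.ball x s) = ∫⁻ y in Metric.ball x s, (‖g y‖₊ : ℝ≥0∞) :=
    fun x s => withDensity_apply _ measurableSet_ball
  set S := {x | l < HLMax' g x} with hS
  have hch : ∀ x ∈ S, ∃ s : ℝ, 0 < s ∧ l * volume (Metric.ball x s) < ν (Metric.ball x s) := by
    intro x hx
    rw [hS, mem_setOf_eq, HLMax'] at hx
    rw [lt_iSup_iff] at hx
    obtain ⟨s, hx⟩ := hx
    rw [lt_iSup_iff] at hx
    obtain ⟨hs, hx⟩ := hx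
    refine ⟨s, hs, ?_⟩
    rw [ballAvg] at hx
    have hvol0 : volume (Metric.ball x s) ≠ 0 := (measure_ball_pos _ _ hs).ne'
    have hvoltop : volume (Metric.ball x s) ≠ ∞ := measure_ball_lt_top.ne
    rw [hνapp, mul_comm]
    calc volume (Metric.ball x s) * l
        < volume (Metric.ball x s) * ((volume (Metric.ball x s))⁻¹
            * ∫⁻ y in Metric.ball x s, (‖g y‖₊ : ℝ≥0∞)) := by
          exact ENNReal.mul_lt_mul_right hvol0 hvoltop hx
      _ = _ := by
          rw [← mul_assoc, ENNReal.mul_inv_cancel hvol0 hvoltop, one_mul]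
  choose! r hr0 hrlt using hch
  have hv₁0 : volume (Metric.ball (0 : EuclideanSpace ℝ (Fin d)) 1) ≠ 0 :=
    (measure_ball_pos _ _ one_pos).ne'
  set K := I / l / volume (Metric.ball (0 : EuclideanSpace ℝ (Fin d)) 1) with hK
  have hKtop : K ≠ ∞ := by
    rw [hK]
    exact (ENNReal.div_lt_top (ENNReal.div_lt_top hItop hl0).ne hv₁0).ne
  have hrR : ∀ x ∈ S, r x ≤ max 1 K.toReal := by
    intro x hx
    have h1 : l * volume (Metric.ball x (r x)) ≤ I := by
      refine le_trans (hrlt x hx).le ?_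
      rw [hνapp]
      exact setLIntegral_le_lintegral _ _
    have h2 : volume (Metric.ball x (r x)) ≤ I / l :=
      ENNReal.le_div_iff_mul_le (Or.inl hl0) (Or.inl hltop) |>.2 (by rwa [mul_comm])
    rw [Measure.addHaar_ball_of_pos _ _ (hr0 x hx), finrank_euclideanSpace_fin] at h2
    have h3 : ENNReal.ofReal (r x ^ d) ≤ K := by
      rw [hK]
      exact ENNReal.le_div_iff_mul_le (Or.inl hv₁0) (Or.inl measure_ball_lt_top.ne) |>.2 h2
    have h4 : r x ^ d ≤ K.toReal :=
      (ENNReal.ofReal_le_iff_le_toReal hKtop).1 h3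
    by_contra hcon
    push_neg at hcon
    have h5 : (1 : ℝ) ≤ r x := le_of_lt (lt_of_le_of_lt (le_max_left _ _) hcon)
    have h6 : r x ≤ r x ^ d := le_self_pow₀ h5 hd
    have : r x ≤ K.toReal := le_trans h6 h4
    exact absurd (lt_of_le_of_lt (le_max_right 1 K.toReal) hcon) (not_lt.2 this)
  obtain ⟨u, huS, hdisj, hcov⟩ :=
    Vitali.exists_disjoint_subfamily_covering_enlargement_closedBall S id r (max 1 K.toReal)
      hrR 4 (by norm_num)
  simp only [id_eq] at hdisj hcov
  have hucnt : u.Countable := by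
    refine hdisj.countable_of_nonempty_interior fun b hb => ?_
    have hb' : b ∈ S := huS hb
    exact ⟨b, ball_subset_interior_closedBall (mem_ball_self (hr0 b hb'))⟩
  have hSsub : S ⊆ ⋃ b ∈ u, Metric.closedBall b (4 * r b) := by
    intro a ha
    obtain ⟨b, hbu, hsub⟩ := hcov a ha
    exact mem_biUnion hbu (hsub (mem_closedBall_self (hr0 a ha).le))
  calc volume S ≤ volume (⋃ b ∈ u, Metric.closedBall b (4 * r b)) := measure_mono hSsub
    _ ≤ ∑' b : u, volume (Metric.closedBall (b : EuclideanSpace ℝ (Fin d))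
          (4 * r (b : EuclideanSpace ℝ (Fin d)))) := measure_biUnion_le _ hucnt _
    _ ≤ ∑' b : u, 5 ^ d * (ν (Metric.ball (b : EuclideanSpace ℝ (Fin d)) (r b)) / l) := by
        apply ENNReal.tsum_le_tsum
        intro b
        have hbS : (b : EuclideanSpace ℝ (Fin d)) ∈ S := huS b.2
        have hrb : 0 < r b := hr0 _ hbS
        have step1 : volume (Metric.closedBall (b : EuclideanSpace ℝ (Fin d)) (4 * r b))
            ≤ volume (Metric.ball (b : EuclideanSpace ℝ (Fin d)) (5 * r b)) :=
          measure_mono (Metric.closedBall_subset_ball (by linarith))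
        have step2 : volume (Metric.ball (b : EuclideanSpace ℝ (Fin d)) (5 * r b))
            = 5 ^ d * volume (Metric.ball (b : EuclideanSpace ℝ (Fin d)) (r b)) := by
          rw [Measure.addHaar_ball_mul_of_pos _ _ (by norm_num : (0:ℝ) < 5),
            finrank_euclideanSpace_fin]
          rw [ENNReal.ofReal_pow (by norm_num : (0:ℝ) ≤ 5), ENNReal.ofReal_ofNat,
            Measure.addHaar_ball_center]
          exact congrArg _ (Measure.addHaar_ball_center volume _ _).symm
        have step3 : volume (Metric.ball (b : EuclideanSpace ℝ (Fin d)) (r b))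
            ≤ ν (Metric.ball (b : EuclideanSpace ℝ (Fin d)) (r b)) / l :=
          ENNReal.le_div_iff_mul_le (Or.inl hl0) (Or.inl hltop) |>.2
            (by rw [mul_comm]; exact (hrlt _ hbS).le)
        calc volume (Metric.closedBall (b : EuclideanSpace ℝ (Fin d)) (4 * r b))
            ≤ 5 ^ d * volume (Metric.ball (b : EuclideanSpace ℝ (Fin d)) (r b)) := by
              rw [← step2]; exact step1
          _ ≤ 5 ^ d * (ν (Metric.ball (b : EuclideanSpace ℝ (Fin d)) (r b)) / l) := by
              exact mul_le_mul_right step3 _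
    _ = 5 ^ d * ((∑' b : u, ν (Metric.ball (b : EuclideanSpace ℝ (Fin d)) (r b))) / l) := by
        rw [ENNReal.tsum_mul_left]
        congr 1
        simp_rw [div_eq_mul_inv]
        rw [ENNReal.tsum_mul_right]
    _ ≤ 5 ^ d * (I / l) := by
        apply mul_le_mul_right
        apply ENNReal.div_le_div_right
        have hdisj' : u.PairwiseDisjoint
            (fun b => Metric.ball (b : EuclideanSpace ℝ (Fin d)) (r b)) :=
          hdisj.mono_on fun b _ => ball_subset_closedBall
        rw [← measure_biUnion hucnt hdisj' (fun b _ => measurableSet_ball)]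
        calc ν (⋃ b ∈ u, Metric.ball b (r b)) ≤ ν univ := measure_mono (subset_univ _)
          _ = I := by rw [hν, withDensity_apply _ MeasurableSet.univ, setLIntegral_univ]
    _ = 5 ^ d * I / l := by rw [mul_div_assoc]

/-! ### Truncation -/

lemma hlmax_le_trunc {d : ℕ} (f : EuclideanSpace ℝ (Fin d) → ℂ) (c : ℝ)
    (x : EuclideanSpace ℝ (Fin d)) :
    HLMax' f x
      ≤ HLMax' (fun y => if c ≤ ‖f y‖ then f y else 0) x + ENNReal.ofReal c := by
  apply iSup₂_le
  intro r hr
  set g : EuclideanSpace ℝ (Fin d) → ℂ := fun y => if c ≤ ‖f y‖ then f y else 0 with hg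
  have hpt : ∀ y, (‖f y‖₊ : ℝ≥0∞) ≤ (‖g y‖₊ : ℝ≥0∞) + ENNReal.ofReal c := by
    intro y
    by_cases h : c ≤ ‖f y‖
    · rw [hg]; simp only [if_pos h]; exact le_self_add
    · push_neg at h
      rw [← ENNReal.ofReal_coe_nnreal, coe_nnnorm]
      exact le_add_left (ENNReal.ofReal_le_ofReal h.le)
  have hvol0 : volume (Metric.ball x r) ≠ 0 := (measure_ball_pos _ _ hr).ne'
  have hvoltop : volume (Metric.ball x r) ≠ ∞ := measure_ball_lt_top.ne
  calc ballAvg f r x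
      ≤ (volume (Metric.ball x r))⁻¹
          * ∫⁻ y in Metric.ball x r, ((‖g y‖₊ : ℝ≥0∞) + ENNReal.ofReal c) :=
        mul_le_mul_right (lintegral_mono fun y => hpt y) _
    _ = (volume (Metric.ball x r))⁻¹
          * ((∫⁻ y in Metric.ball x r, (‖g y‖₊ : ℝ≥0∞))
            + ENNReal.ofReal c * volume (Metric.ball x r)) := by
        rw [lintegral_add_right _ measurable_const, setLIntegral_const]
    _ = ballAvg g r x
          + (volume (Metric.ball x r))⁻¹ * (volume (Metric.ball x r) * ENNReal.ofReal c) := by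
        rw [mul_add, ballAvg, mul_comm (ENNReal.ofReal c)]
    _ = ballAvg g r x + ENNReal.ofReal c := by
        rw [← mul_assoc, ENNReal.inv_mul_cancel hvol0 hvoltop, one_mul]
    _ ≤ _ := add_le_add_left
        (le_iSup₂ (f := fun (r : ℝ) (_ : 0 < r) => ballAvg g r x) r hr) _

/-! ### Main theorem -/

/-- **Stein-type theorem, sufficiency.** If `f` is supported in a closed ball `B` and belongs to
`L log log L (B)`, then `M(f) ∈ L_Ψ(B)`. -/
theorem stein_type_sufficiency {d : ℕ} (x₀ : EuclideanSpace ℝ (Fin d)) (r₀ : ℝ) (hr₀ : 0 < r₀)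
    (f : EuclideanSpace ℝ (Fin d) → ℂ) (hmeas : Measurable f) (hint : Integrable f)
    (hsupp : ∀ x, x ∉ Metric.closedBall x₀ r₀ → f x = 0)
    (hLLL : ∫⁻ x in Metric.closedBall x₀ r₀,
      ENNReal.ofReal (‖f x‖ * logPlus (logPlus ‖f x‖)) < ∞) :
    ∫⁻ x in Metric.closedBall x₀ r₀,
      ENNReal.ofReal (PsiFun x ((HLMax f x).toReal)) < ∞ := by
  classical
  set B := Metric.closedBall x₀ r₀ with hB
  have hBmeas : MeasurableSet B := measurableSet_closedBall
  have hvolB : volume B < ∞ := measure_closedBall_lt_top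
  rcases Nat.eq_zero_or_pos d with hd0 | hdpos
  · -- trivial case `d = 0`
    subst hd0
    haveI hsub : Subsingleton (EuclideanSpace ℝ (Fin 0)) :=
      ⟨fun a b => by ext i; exact i.elim0⟩
    have hball : ∀ (x : EuclideanSpace ℝ (Fin 0)) (r : ℝ), 0 < r →
        Metric.ball x r = univ := by
      intro x r hr
      ext y
      simp only [Metric.mem_ball, mem_univ, iff_true]
      rw [Subsingleton.elim y x, dist_self]
      exact hr
    set C : ℝ≥0∞ := (volume (univ : Set (EuclideanSpace ℝ (Fin 0))))⁻¹
      * ∫⁻ y, (‖f y‖₊ : ℝ≥0∞) with hC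
    have hconst : ∀ x : EuclideanSpace ℝ (Fin 0), HLMax f x = C := by
      intro x
      apply le_antisymm
      · apply iSup₂_le
        intro r hr
        rw [hball x r hr, hC, Measure.restrict_univ]
      · have h := le_iSup₂ (f := fun (r : ℝ) (_ : 0 < r) =>
          (volume (Metric.ball x r))⁻¹ * ∫⁻ y in Metric.ball x r, (‖f y‖₊ : ℝ≥0∞)) 1 one_pos
        rw [hball x 1 one_pos, Measure.restrict_univ] at h
        exact h
    calc ∫⁻ x in B, ENNReal.ofReal (PsiFun x ((HLMax f x).toReal))
        ≤ ∫⁻ _x in B, ENNReal.ofReal (C.toReal) := by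
          apply lintegral_mono
          intro x
          dsimp only
          rw [hconst x]
          exact ENNReal.ofReal_le_ofReal (psiFun_le_self _ _ ENNReal.toReal_nonneg)
      _ = ENNReal.ofReal (C.toReal) * volume B := setLIntegral_const _ _
      _ < ∞ := ENNReal.mul_lt_top ENNReal.ofReal_lt_top hvolB
  -- main case `1 ≤ d`
  have hd : d ≠ 0 := hdpos.ne'
  set F : EuclideanSpace ℝ (Fin d) → ℝ := fun x => (HLMax f x).toReal with hF
  have hMmeas : Measurable (HLMax f) := by
    rw [HLMax_eq_HLMax']; exact measurable_hlmax f hmeas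
  have hFmeas : Measurable F := hMmeas.ennreal_toReal
  have hFnn : ∀ x, 0 ≤ F x := fun x => ENNReal.toReal_nonneg
  -- interval integrability of `1 / log (e + t)`
  have gcont : ∀ a : ℝ, 0 ≤ a →
      IntervalIntegrable (fun t => 1 / Real.log (Real.exp 1 + t)) volume 0 a := by
    intro a ha
    apply ContinuousOn.intervalIntegrable
    rw [uIcc_of_le ha]
    apply ContinuousOn.div continuousOn_const
    · apply ContinuousOn.log ((continuous_const.add continuous_id).continuousOn)
      intro t ht
      have h1 := Real.exp_pos 1
      have h2 : (0:ℝ) ≤ t := ht.1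
      simp only [Pi.add_apply, id_eq]
      exact ne_of_gt (by linarith)
    · intro t ht
      have := one_le_log_e_add t ht.1
      exact ne_of_gt (by linarith)
  -- pointwise bound by an antiderivative
  have hpoint : ∀ x, ENNReal.ofReal (PsiFun x (F x))
      ≤ ENNReal.ofReal (∫ t in (0:ℝ)..(F x), 1 / Real.log (Real.exp 1 + t)) := by
    intro x
    apply ENNReal.ofReal_le_ofReal
    have h1 := psiFun_le x (F x) (hFnn x)
    have h2 : F x / Real.log (Real.exp 1 + F x)
        ≤ ∫ t in (0:ℝ)..(F x), 1 / Real.log (Real.exp 1 + t) := by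
      have hconst_int : IntervalIntegrable
          (fun _ : ℝ => 1 / Real.log (Real.exp 1 + F x)) volume 0 (F x) :=
        intervalIntegrable_const
      have hle := intervalIntegral.integral_mono_on (hFnn x) hconst_int
        (gcont (F x) (hFnn x)) ?_
      · rw [intervalIntegral.integral_const, smul_eq_mul, sub_zero] at hle
        calc F x / Real.log (Real.exp 1 + F x)
            = F x * (1 / Real.log (Real.exp 1 + F x)) := by ring
          _ ≤ _ := hle
      · intro t ht
        have l1 : (1:ℝ) ≤ Real.log (Real.exp 1 + t) := one_le_log_e_add t ht.1
        have ht1 : (0:ℝ) ≤ t := ht.1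
        have ht2 : t ≤ F x := ht.2
        have hep := Real.exp_pos 1
        have l2 : Real.log (Real.exp 1 + t) ≤ Real.log (Real.exp 1 + F x) :=
          Real.log_le_log (by linarith) (by linarith)
        exact one_div_le_one_div_of_le (by linarith) l2
    linarith
  -- layer cake
  have hlayer : (∫⁻ x in B, ENNReal.ofReal
        (∫ t in (0:ℝ)..(F x), 1 / Real.log (Real.exp 1 + t)))
      = ∫⁻ t in Ioi (0:ℝ), volume.restrict B {a | t ≤ F a}
          * ENNReal.ofReal (1 / Real.log (Real.exp 1 + t)) := by
    apply lintegral_comp_eq_lintegral_meas_le_mul (volume.restrict B)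
      (Filter.Eventually.of_forall hFnn) hFmeas.aemeasurable
      (fun t ht => gcont t ht.le)
    rw [ae_restrict_iff' measurableSet_Ioi]
    apply Filter.Eventually.of_forall
    intro t ht
    have := one_le_log_e_add t (le_of_lt ht)
    positivity
  -- the part `t ≤ 2`
  have hpart1 : (∫⁻ t in Ioc (0:ℝ) 2, volume.restrict B {a | t ≤ F a}
      * ENNReal.ofReal (1 / Real.log (Real.exp 1 + t))) < ∞ := by
    have hb : ∀ t ∈ Ioc (0:ℝ) 2, volume.restrict B {a | t ≤ F a}
        * ENNReal.ofReal (1 / Real.log (Real.exp 1 + t)) ≤ volume B := by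
      intro t ht
      calc volume.restrict B {a | t ≤ F a}
            * ENNReal.ofReal (1 / Real.log (Real.exp 1 + t)) ≤ volume B * 1 := by
            apply mul_le_mul'
            · exact le_trans (measure_mono (subset_univ _))
                (le_of_eq (Measure.restrict_apply_univ _))
            · apply ENNReal.ofReal_le_one.2
              have := one_le_log_e_add t ht.1.le
              rw [div_le_one (by linarith)]; linarith
        _ = volume B := mul_one _
    calc (∫⁻ t in Ioc (0:ℝ) 2, volume.restrict B {a | t ≤ F a}
          * ENNReal.ofReal (1 / Real.log (Real.exp 1 + t)))
        ≤ ∫⁻ _t in Ioc (0:ℝ) 2, volume B := setLIntegral_mono' measurableSet_Ioc hb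
      _ = volume B * volume (Ioc (0:ℝ) 2) := setLIntegral_const _ _
      _ < ∞ := ENNReal.mul_lt_top hvolB (by rw [Real.volume_Ioc]; exact ENNReal.ofReal_lt_top)
  -- the part `t > 2`
  set w : ℝ → ℝ≥0∞ := fun t => ENNReal.ofReal (1 / (t * Real.log (Real.exp 1 + t))) with hw
  set G : ℝ → EuclideanSpace ℝ (Fin d) → ℝ≥0∞ :=
    fun t y => (if t/2 ≤ ‖f y‖ then (‖f y‖₊ : ℝ≥0∞) else 0) * w t with hG
  have hwmeas : Measurable w := ENNReal.measurable_ofReal.comp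
    (measurable_const.div (measurable_id.mul
      (Real.measurable_log.comp (measurable_const.add measurable_id))))
  have hGmeas : Measurable (Function.uncurry G) := by
    apply Measurable.mul
    · exact Measurable.ite (measurableSet_le (measurable_fst.div_const 2)
        ((hmeas.comp measurable_snd).norm)) ((hmeas.comp measurable_snd).enorm)
        measurable_const
    · exact hwmeas.comp measurable_fst
  have hker : ∀ t ∈ Ioi (2:ℝ), volume.restrict B {a | t ≤ F a}
      * ENNReal.ofReal (1 / Real.log (Real.exp 1 + t))
      ≤ 5 ^ d * 4 * ∫⁻ y, G t y := by
    intro t ht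
    simp only [mem_Ioi] at ht
    set g : EuclideanSpace ℝ (Fin d) → ℂ := fun y => if t/2 ≤ ‖f y‖ then f y else 0 with hgdef
    have hsubset : {a | t ≤ F a} ∩ B ⊆ {x | ENNReal.ofReal (t/4) < HLMax' g x} := by
      rintro x ⟨hx, _⟩
      have h1 : ENNReal.ofReal t ≤ HLMax f x := ENNReal.ofReal_le_of_le_toReal hx
      have h2 : HLMax f x ≤ HLMax' g x + ENNReal.ofReal (t/2) := by
        rw [HLMax_eq_HLMax']
        exact hlmax_le_trunc f (t/2) x
      have h3 : ENNReal.ofReal (t/2) ≤ HLMax' g x := by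
        have heq : ENNReal.ofReal t = ENNReal.ofReal (t/2) + ENNReal.ofReal (t/2) := by
          rw [← ENNReal.ofReal_add (by linarith) (by linarith)]
          norm_num
        rw [heq] at h1
        exact (ENNReal.add_le_add_iff_right ENNReal.ofReal_ne_top).1 (h1.trans h2)
      have h4 : ENNReal.ofReal (t/4) < ENNReal.ofReal (t/2) := by
        rw [ENNReal.ofReal_lt_ofReal_iff (by linarith)]
        linarith
      exact lt_of_lt_of_le h4 h3
    have hweak := hlmax_weak_type hd g (l := ENNReal.ofReal (t/4))
      (by rw [ne_eq, ENNReal.ofReal_eq_zero]; push_neg; linarith) ENNReal.ofReal_ne_top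
    have hmb : volume.restrict B {a | t ≤ F a}
        ≤ 5 ^ d * (∫⁻ y, (‖g y‖₊ : ℝ≥0∞)) / ENNReal.ofReal (t/4) := by
      rw [Measure.restrict_apply' hBmeas]
      exact le_trans (measure_mono hsubset) hweak
    have hLpos : (1:ℝ) ≤ Real.log (Real.exp 1 + t) := one_le_log_e_add t (by linarith)
    have hc : (ENNReal.ofReal (t/4))⁻¹ * ENNReal.ofReal (1 / Real.log (Real.exp 1 + t))
        = 4 * w t := by
      rw [← ENNReal.ofReal_inv_of_pos (by linarith : (0:ℝ) < t/4)]
      rw [← ENNReal.ofReal_mul (by positivity)]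
      rw [hw]
      rw [show ((t/4)⁻¹ * (1 / Real.log (Real.exp 1 + t)))
        = 4 * (1 / (t * Real.log (Real.exp 1 + t))) by
          field_simp]
      rw [ENNReal.ofReal_mul (by norm_num), ENNReal.ofReal_ofNat]
    have hIg : (∫⁻ y, (‖g y‖₊ : ℝ≥0∞)) * w t = ∫⁻ y, G t y := by
      rw [← lintegral_mul_const' (w t) _ ENNReal.ofReal_ne_top]
      apply lintegral_congr
      intro y
      simp only [hG, hgdef]
      by_cases h : t/2 ≤ ‖f y‖
      · simp only [if_pos h]
      · simp only [if_neg h, nnnorm_zero, ENNReal.coe_zero, zero_mul]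
    calc volume.restrict B {a | t ≤ F a} * ENNReal.ofReal (1 / Real.log (Real.exp 1 + t))
        ≤ (5 ^ d * (∫⁻ y, (‖g y‖₊ : ℝ≥0∞)) / ENNReal.ofReal (t/4))
            * ENNReal.ofReal (1 / Real.log (Real.exp 1 + t)) := mul_le_mul_left hmb _
      _ = 5 ^ d * (∫⁻ y, (‖g y‖₊ : ℝ≥0∞))
            * ((ENNReal.ofReal (t/4))⁻¹ * ENNReal.ofReal (1 / Real.log (Real.exp 1 + t))) := by
          rw [div_eq_mul_inv]; ring
      _ = 5 ^ d * (∫⁻ y, (‖g y‖₊ : ℝ≥0∞)) * (4 * w t) := by rw [hc]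
      _ = 5 ^ d * 4 * ((∫⁻ y, (‖g y‖₊ : ℝ≥0∞)) * w t) := by ring
      _ = 5 ^ d * 4 * ∫⁻ y, G t y := by rw [hIg]
  -- inner integral bound
  have hinner : ∀ y, (∫⁻ t in Ioi (2:ℝ), G t y)
      ≤ 6 * (‖f y‖₊ : ℝ≥0∞)
        + 3 * ((‖f y‖₊ : ℝ≥0∞) * ENNReal.ofReal (logPlus (logPlus ‖f y‖))) := by
    intro y
    have hu0 : (0:ℝ) ≤ ‖f y‖ := norm_nonneg _
    have e1 : ∀ t : ℝ, G t y
        = (Iic (2 * ‖f y‖)).indicator (fun t => (‖f y‖₊ : ℝ≥0∞) * w t) t := by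
      intro t
      simp only [hG]
      by_cases h : t/2 ≤ ‖f y‖
      · rw [if_pos h, indicator_of_mem (by rw [mem_Iic]; linarith)]
      · rw [if_neg h, indicator_of_notMem (by rw [mem_Iic]; intro hh; exact h (by linarith)),
          zero_mul]
    calc (∫⁻ t in Ioi (2:ℝ), G t y)
        = ∫⁻ t in Ioi (2:ℝ),
            (Iic (2 * ‖f y‖)).indicator (fun t => (‖f y‖₊ : ℝ≥0∞) * w t) t :=
          lintegral_congr fun t => e1 t
      _ = ∫⁻ t in Ioc (2:ℝ) (2 * ‖f y‖), (‖f y‖₊ : ℝ≥0∞) * w t := by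
          rw [lintegral_indicator measurableSet_Iic,
            Measure.restrict_restrict measurableSet_Iic, Set.inter_comm, Set.Ioi_inter_Iic]
      _ = (‖f y‖₊ : ℝ≥0∞) * ∫⁻ t in Ioc (2:ℝ) (2 * ‖f y‖), w t :=
          lintegral_const_mul' _ _ ENNReal.coe_ne_top
      _ ≤ (‖f y‖₊ : ℝ≥0∞)
            * ENNReal.ofReal (3 * Real.log (Real.log (Real.exp 1 + 2 * ‖f y‖))) := by
          apply mul_le_mul_right
          rw [hw]
          exact lintegral_inv_t_log_le (2 * ‖f y‖) (by linarith)
      _ ≤ (‖f y‖₊ : ℝ≥0∞) * ENNReal.ofReal (6 + 3 * logPlus (logPlus ‖f y‖)) := by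
          apply mul_le_mul_right
          apply ENNReal.ofReal_le_ofReal
          have := loglog_le ‖f y‖ hu0
          linarith
      _ = 6 * (‖f y‖₊ : ℝ≥0∞)
            + 3 * ((‖f y‖₊ : ℝ≥0∞) * ENNReal.ofReal (logPlus (logPlus ‖f y‖))) := by
          rw [ENNReal.ofReal_add (by norm_num)
            (by nlinarith [logPlus_nonneg (logPlus ‖f y‖)]),
            ENNReal.ofReal_mul (by norm_num : (0:ℝ) ≤ 3)]
          rw [show ENNReal.ofReal (6:ℝ) = 6 from ENNReal.ofReal_ofNat 6,
            show ENNReal.ofReal (3:ℝ) = 3 from ENNReal.ofReal_ofNat 3]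
          ring
  -- finiteness of the two pieces
  have hA : (∫⁻ y, (‖f y‖₊ : ℝ≥0∞)) < ∞ := hint.2
  have hCfin : (∫⁻ y, (‖f y‖₊ : ℝ≥0∞) * ENNReal.ofReal (logPlus (logPlus ‖f y‖))) < ∞ := by
    have heq : ∀ y : EuclideanSpace ℝ (Fin d),
        (‖f y‖₊ : ℝ≥0∞) * ENNReal.ofReal (logPlus (logPlus ‖f y‖))
        = ENNReal.ofReal (‖f y‖ * logPlus (logPlus ‖f y‖)) := by
      intro y
      rw [ENNReal.ofReal_mul (norm_nonneg _), ← ENNReal.ofReal_coe_nnreal, coe_nnnorm]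
    simp_rw [heq]
    rw [← lintegral_add_compl
      (fun y => ENNReal.ofReal (‖f y‖ * logPlus (logPlus ‖f y‖))) hBmeas]
    have hcomp : (∫⁻ y in Bᶜ, ENNReal.ofReal (‖f y‖ * logPlus (logPlus ‖f y‖))) = 0 := by
      rw [setLIntegral_congr_fun hBmeas.compl
        (fun y hy => ?_), lintegral_zero]
      rw [hsupp y hy]
      simp
    rw [hcomp, add_zero]
    exact hLLL
  have hmeasLL : Measurable fun y : EuclideanSpace ℝ (Fin d) =>
      (‖f y‖₊ : ℝ≥0∞) * ENNReal.ofReal (logPlus (logPlus ‖f y‖)) :=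
    hmeas.enorm.mul (ENNReal.measurable_ofReal.comp
      (measurable_logPlus.comp (measurable_logPlus.comp hmeas.norm)))
  have hpart2 : (∫⁻ t in Ioi (2:ℝ), volume.restrict B {a | t ≤ F a}
      * ENNReal.ofReal (1 / Real.log (Real.exp 1 + t))) < ∞ := by
    have hGm : Measurable fun t => ∫⁻ y, G t y :=
      Measurable.lintegral_prod_right' hGmeas
    have h54 : (5:ℝ≥0∞) ^ d * 4 < ∞ :=
      ENNReal.mul_lt_top (ENNReal.pow_lt_top ENNReal.ofNat_lt_top) ENNReal.ofNat_lt_top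
    have h6top : (6:ℝ≥0∞) < ∞ := ENNReal.ofNat_lt_top
    have h3top : (3:ℝ≥0∞) < ∞ := ENNReal.ofNat_lt_top
    calc (∫⁻ t in Ioi (2:ℝ), volume.restrict B {a | t ≤ F a}
          * ENNReal.ofReal (1 / Real.log (Real.exp 1 + t)))
        ≤ ∫⁻ t in Ioi (2:ℝ), 5 ^ d * 4 * ∫⁻ y, G t y :=
          setLIntegral_mono ((measurable_const.mul hGm)) hker
      _ = 5 ^ d * 4 * ∫⁻ t in Ioi (2:ℝ), ∫⁻ y, G t y :=
          lintegral_const_mul' _ _ h54.ne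
      _ = 5 ^ d * 4 * ∫⁻ y, ∫⁻ t in Ioi (2:ℝ), G t y := by
          rw [lintegral_lintegral_swap hGmeas.aemeasurable]
      _ ≤ 5 ^ d * 4 * ∫⁻ y, (6 * (‖f y‖₊ : ℝ≥0∞)
            + 3 * ((‖f y‖₊ : ℝ≥0∞) * ENNReal.ofReal (logPlus (logPlus ‖f y‖)))) :=
          mul_le_mul_right (lintegral_mono hinner) _
      _ = 5 ^ d * 4 * (6 * (∫⁻ y, (‖f y‖₊ : ℝ≥0∞))
            + 3 * ∫⁻ y, (‖f y‖₊ : ℝ≥0∞) * ENNReal.ofReal (logPlus (logPlus ‖f y‖))) := by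
          rw [lintegral_add_left (show Measurable fun y => 6 * (‖f y‖₊ : ℝ≥0∞) from measurable_const.mul hmeas.enorm),
            lintegral_const_mul _ (show Measurable fun y => (‖f y‖₊ : ℝ≥0∞) from hmeas.enorm), lintegral_const_mul _ hmeasLL]
      _ < ∞ := by
          apply ENNReal.mul_lt_top h54
          apply ENNReal.add_lt_top.2
          constructor
          · exact ENNReal.mul_lt_top h6top hA
          · exact ENNReal.mul_lt_top h3top hCfin
  -- assemble
  calc ∫⁻ x in B, ENNReal.ofReal (PsiFun x ((HLMax f x).toReal))
      ≤ ∫⁻ x in B, ENNReal.ofReal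
          (∫ t in (0:ℝ)..(F x), 1 / Real.log (Real.exp 1 + t)) :=
        lintegral_mono fun x => hpoint x
    _ = ∫⁻ t in Ioi (0:ℝ), volume.restrict B {a | t ≤ F a}
          * ENNReal.ofReal (1 / Real.log (Real.exp 1 + t)) := hlayer
    _ = (∫⁻ t in Ioc (0:ℝ) 2, volume.restrict B {a | t ≤ F a}
          * ENNReal.ofReal (1 / Real.log (Real.exp 1 + t)))
        + ∫⁻ t in Ioi (2:ℝ), volume.restrict B {a | t ≤ F a}
          * ENNReal.ofReal (1 / Real.log (Real.exp 1 + t)) := by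
        rw [← Ioc_union_Ioi_eq_Ioi (by norm_num : (0:ℝ) ≤ 2),
          lintegral_union measurableSet_Ioi (Ioc_disjoint_Ioi le_rfl)]
    _ < ∞ := ENNReal.add_lt_top.2 ⟨hpart1, hpart2⟩
end

section
/- Let g(s,t) := 1/(log(e+t) + log(e+s)) for s,t ≥ 0 and Ψ(x,t) := t/(log(e+t) + log(e+|x|)). Then for all x ∈ ℝ^d and all t ≥ 0, Ψ(x,t) ≤ ∫_0^t g(|x|,τ) dτ ≤ 2 Ψ(x,t). -/
open MeasureTheory Real

/-- `g(s,t) = 1/(log(e+t) + log(e+s))`. -/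
noncomputable def gFun (s t : ℝ) : ℝ :=
  1 / (Real.log (Real.exp 1 + t) + Real.log (Real.exp 1 + s))

lemma one_le_logE (a : ℝ) (ha : 0 ≤ a) : 1 ≤ Real.log (Real.exp 1 + a) := by
  have h := Real.log_le_log (Real.exp_pos 1) (by linarith : Real.exp 1 ≤ Real.exp 1 + a)
  simpa [Real.log_exp] using h

lemma logE_contOn : ContinuousOn (fun τ : ℝ => Real.log (Real.exp 1 + τ)) (Set.Ici 0) := by
  apply (continuous_const.add continuous_id).continuousOn.log
  intro τ hτ
  have : (0:ℝ) ≤ τ := hτ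
  have := Real.exp_pos 1
  show Real.exp 1 + τ ≠ 0; positivity

lemma hasDeriv_phi (L τ : ℝ) (hτ : 0 ≤ τ) (hL : 1 ≤ L) :
    HasDerivAt (fun u : ℝ => 2 * (u / (Real.log (Real.exp 1 + u) + L)))
      (2 * (((Real.log (Real.exp 1 + τ) + L) - τ * (1 / (Real.exp 1 + τ))) /
        (Real.log (Real.exp 1 + τ) + L)^2)) τ := by
  have hpos : (0:ℝ) < Real.exp 1 + τ := by have := Real.exp_pos 1; linarith
  have hlog : HasDerivAt (fun u : ℝ => Real.log (Real.exp 1 + u)) (1 / (Real.exp 1 + τ)) τ := by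
    have h1 : HasDerivAt (fun u : ℝ => Real.exp 1 + u) 1 τ := (hasDerivAt_id τ).const_add _
    have h2 := (Real.hasDerivAt_log (ne_of_gt hpos)).comp τ h1
    simpa [one_div, Function.comp_def] using h2
  have hden : HasDerivAt (fun u : ℝ => Real.log (Real.exp 1 + u) + L) (1 / (Real.exp 1 + τ)) τ :=
    hlog.add_const _
  have hdne : Real.log (Real.exp 1 + τ) + L ≠ 0 := by
    have := one_le_logE τ hτ; linarith
  have := ((hasDerivAt_id τ).div hden hdne).const_mul (2:ℝ)
  simpa [mul_comm] using this

/-- For all `x ∈ ℝ^d` and `t ≥ 0`, `Ψ(x,t) ≤ ∫_0^t g(|x|,τ) dτ ≤ 2 Ψ(x,t)`. -/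
theorem psi_le_integral_g_le_two_psi {d : ℕ} (x : EuclideanSpace ℝ (Fin d)) (t : ℝ)
    (ht : 0 ≤ t) :
    PsiFun x t ≤ (∫ τ in (0:ℝ)..t, gFun ‖x‖ τ) ∧
      (∫ τ in (0:ℝ)..t, gFun ‖x‖ τ) ≤ 2 * PsiFun x t := by
  set L : ℝ := Real.log (Real.exp 1 + ‖x‖) with hLdef
  have hL : 1 ≤ L := one_le_logE _ (norm_nonneg x)
  have hAt : 1 ≤ Real.log (Real.exp 1 + t) := one_le_logE t ht
  have hIcc : Set.uIcc (0:ℝ) t = Set.Icc 0 t := Set.uIcc_of_le ht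
  have hsub : Set.Icc (0:ℝ) t ⊆ Set.Ici 0 := fun τ hτ => hτ.1
  -- continuity of g
  have hgcont : ContinuousOn (gFun ‖x‖) (Set.Icc 0 t) := by
    apply ContinuousOn.div continuousOn_const
      ((logE_contOn.mono hsub).add continuousOn_const)
    intro τ hτ
    have := one_le_logE τ hτ.1
    simp only [← hLdef, Pi.add_apply]
    linarith
  have hgint : IntervalIntegrable (gFun ‖x‖) volume 0 t :=
    (hgcont.mono (by rw [hIcc])).intervalIntegrable
  -- continuity of φ'
  have hφ'cont : ContinuousOn (fun τ : ℝ =>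
      2 * (((Real.log (Real.exp 1 + τ) + L) - τ * (1 / (Real.exp 1 + τ))) /
        (Real.log (Real.exp 1 + τ) + L)^2)) (Set.Icc 0 t) := by
    apply ContinuousOn.mul continuousOn_const
    apply ContinuousOn.div
    · apply ContinuousOn.sub ((logE_contOn.mono hsub).add continuousOn_const)
      apply ContinuousOn.mul continuousOn_id
      apply ContinuousOn.div continuousOn_const (continuous_const.add continuous_id).continuousOn
      intro τ hτ
      have := Real.exp_pos 1
      have : (0:ℝ) ≤ τ := hτ.1
      show Real.exp 1 + τ ≠ 0; positivity
    · exact ((logE_contOn.mono hsub).add continuousOn_const).pow 2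
    · intro τ hτ
      have := one_le_logE τ hτ.1
      positivity
  constructor
  · -- lower bound
    have key : ∀ τ ∈ Set.Icc (0:ℝ) t, gFun ‖x‖ t ≤ gFun ‖x‖ τ := by
      intro τ hτ
      have hmono : Real.log (Real.exp 1 + τ) ≤ Real.log (Real.exp 1 + t) := by
        apply Real.log_le_log (by have := Real.exp_pos 1; linarith [hτ.1]) (by linarith [hτ.2])
      have h1 := one_le_logE τ hτ.1
      unfold gFun
      rw [← hLdef]
      apply one_div_le_one_div_of_le (by linarith) (by linarith)
    have := intervalIntegral.integral_mono_on ht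
      (intervalIntegrable_const (c := gFun ‖x‖ t)) hgint key
    rw [intervalIntegral.integral_const] at this
    have heq : PsiFun x t = (t - 0) • gFun ‖x‖ t := by
      unfold PsiFun gFun
      rw [← hLdef]
      simp only [sub_zero, smul_eq_mul, mul_one_div]
    linarith [heq ▸ this]
  · -- upper bound
    have hftc : (∫ τ in (0:ℝ)..t,
        2 * (((Real.log (Real.exp 1 + τ) + L) - τ * (1 / (Real.exp 1 + τ))) /
          (Real.log (Real.exp 1 + τ) + L)^2)) = 2 * PsiFun x t := by
      rw [intervalIntegral.integral_eq_sub_of_hasDerivAt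
        (f := fun u : ℝ => 2 * (u / (Real.log (Real.exp 1 + u) + L)))
        (fun τ hτ => hasDeriv_phi L τ (hIcc ▸ hτ).1 hL)
        ((hφ'cont.mono (by rw [hIcc])).intervalIntegrable)]
      unfold PsiFun
      rw [← hLdef]
      simp only [zero_div, mul_zero, sub_zero, mul_div_assoc]
    rw [← hftc]
    apply intervalIntegral.integral_mono_on ht hgint
      ((hφ'cont.mono (by rw [hIcc])).intervalIntegrable)
    intro τ hτ
    have h1 := one_le_logE τ hτ.1
    have hpos : (0:ℝ) < Real.exp 1 + τ := by have := Real.exp_pos 1; linarith [hτ.1]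
    set A := Real.log (Real.exp 1 + τ)
    have hr : τ * (1 / (Real.exp 1 + τ)) ≤ 1 := by
      rw [mul_one_div, div_le_one hpos]
      have := Real.exp_pos 1; linarith
    have hr0 : 0 ≤ τ * (1 / (Real.exp 1 + τ)) :=
      mul_nonneg hτ.1 (by positivity)
    unfold gFun
    rw [← hLdef]
    have heq2 : 2 * ((A + L - τ * (1 / (Real.exp 1 + τ))) / (A + L)^2)
        = (2 * (A + L - τ * (1 / (Real.exp 1 + τ)))) / (A + L)^2 := by ring
    rw [heq2, div_le_div_iff₀ (by linarith) (by positivity)]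
    nlinarith [hr, hL, h1]
end

section
/- Let B = B(x₀, r₀) be a closed ball in ℝ^d and let f be an integrable function supported in B. There exists a constant c₀ > 0, depending only on the dimension d, such that for every x with r₀ < |x − x₀| ≤ 2r₀ one has M(f)(x) ≤ c₀ · M(f)(x₀ + r₀² (x − x₀)/|x − x₀|²). -/
open MeasureTheory Metric Real ENNReal NNReal

/-- **Reflection estimate for the maximal function.** If `f` is supported in the closed ball
`B = B(x₀,r₀)`, then for `r₀ < |x - x₀| ≤ 2 r₀` one has
`M(f)(x) ≤ c₀ M(f)(x₀ + r₀² (x-x₀)/|x-x₀|²)`, with `c₀` depending only on `d`. -/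
theorem maximal_reflection_estimate {d : ℕ} :
    ∃ c₀ : ℝ, 0 < c₀ ∧
      ∀ (x₀ : EuclideanSpace ℝ (Fin d)) (r₀ : ℝ), 0 < r₀ →
      ∀ f : EuclideanSpace ℝ (Fin d) → ℂ, Measurable f → Integrable f →
      (∀ x, x ∉ Metric.closedBall x₀ r₀ → f x = 0) →
      ∀ x : EuclideanSpace ℝ (Fin d), r₀ < ‖x - x₀‖ → ‖x - x₀‖ ≤ 2 * r₀ →
        HLMax f x ≤ ENNReal.ofReal c₀ *
          HLMax f (x₀ + (r₀ ^ 2 / ‖x - x₀‖ ^ 2) • (x - x₀)) := by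
  refine ⟨4 ^ d, by positivity, ?_⟩
  intro x₀ r₀ hr₀ f hfm hfi hsupp x hx1 hx2
  set a := ‖x - x₀‖ with ha
  have ha0 : 0 < a := lt_trans hr₀ hx1
  set xs := x₀ + (r₀ ^ 2 / a ^ 2) • (x - x₀) with hxs
  -- distance between x and its reflection
  have hdist : ‖x - xs‖ ≤ 2 * (a - r₀) := by
    have : x - xs = (1 - r₀ ^ 2 / a ^ 2) • (x - x₀) := by
      rw [hxs]; module
    rw [this, norm_smul, Real.norm_eq_abs, ← ha]
    have h1 : r₀ ^ 2 / a ^ 2 ≤ 1 := by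
      rw [div_le_one (by positivity)]
      nlinarith
    rw [abs_of_nonneg (by linarith),
      show (1 - r₀ ^ 2 / a ^ 2) * a = (a ^ 2 - r₀ ^ 2) / a by field_simp,
      div_le_iff₀ ha0]
    nlinarith
  rw [HLMax]
  refine iSup₂_le fun r hr => ?_
  by_cases hcase : r ≤ a - r₀
  · -- the ball misses the support, integral is zero
    have : ∀ y ∈ ball x r, (‖f y‖₊ : ℝ≥0∞) = 0 := by
      intro y hy
      rw [mem_ball] at hy
      have : f y = 0 := by
        apply hsupp
        rw [mem_closedBall, not_le]
        have := norm_sub_norm_le (x - x₀) (x - y)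
        have hxy : dist x y < r := by rwa [dist_comm]
        rw [dist_eq_norm] at hxy ⊢
        have : a - ‖x - y‖ ≤ ‖y - x₀‖ := by
          calc a - ‖x - y‖ ≤ ‖(x - x₀) - (x - y)‖ := norm_sub_norm_le _ _
          _ = ‖y - x₀‖ := by rw [show (x - x₀) - (x - y) = y - x₀ by abel]
        linarith
      simp [this]
    rw [setLIntegral_congr_fun measurableSet_ball
      this]
    simp
  · push_neg at hcase
    -- ball x r ⊆ ball xs (4r)
    have hsub : ball x r ⊆ ball xs (4 * r) := by
      intro y hy
      rw [mem_ball, dist_eq_norm] at hy ⊢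
      calc ‖y - xs‖ ≤ ‖y - x‖ + ‖x - xs‖ := by
            have := norm_add_le (y - x) (x - xs)
            rwa [show y - x + (x - xs) = y - xs by abel] at this
        _ < r + 2 * (a - r₀) := by
            have : ‖y - x‖ < r := by rwa [norm_sub_rev] at hy ⊢
            linarith
        _ ≤ 4 * r := by linarith
    have hvol : volume (ball xs (4 * r)) = ENNReal.ofReal (4 ^ d) * volume (ball x r) := by
      rw [Measure.addHaar_ball_mul_of_pos volume xs (by norm_num : (0:ℝ) < 4) r,
        Measure.addHaar_ball_center volume x r, finrank_euclideanSpace_fin]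
    have hvpos : 0 < volume (ball x r) := measure_ball_pos volume x hr
    have hvne : volume (ball x r) ≠ ⊤ := measure_ball_lt_top.ne
    have h4 : (ENNReal.ofReal ((4:ℝ) ^ d)) ≠ 0 := by
      positivity
    have h4t : (ENNReal.ofReal ((4:ℝ) ^ d)) ≠ ⊤ := ENNReal.ofReal_ne_top
    calc (volume (ball x r))⁻¹ * ∫⁻ y in ball x r, (‖f y‖₊ : ℝ≥0∞)
        ≤ (volume (ball x r))⁻¹ * ∫⁻ y in ball xs (4 * r), (‖f y‖₊ : ℝ≥0∞) :=
          mul_le_mul_right (lintegral_mono_set hsub) _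
      _ = ENNReal.ofReal (4 ^ d) *
          ((volume (ball xs (4 * r)))⁻¹ * ∫⁻ y in ball xs (4 * r), (‖f y‖₊ : ℝ≥0∞)) := by
          rw [hvol, ENNReal.mul_inv (Or.inl h4) (Or.inl h4t), ← mul_assoc, ← mul_assoc,
            ENNReal.mul_inv_cancel h4 h4t, one_mul]
      _ ≤ ENNReal.ofReal (4 ^ d) * HLMax f xs := by
          gcongr
          rw [HLMax]
          exact le_iSup₂_of_le (4 * r) (by linarith) le_rfl
end
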